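/- Let M ∈ [0,1]^{m×n} and ρ ∈ [0,1). Suppose the random binary matrix A has independent entries with P(A_{ij}=1) = (1-ρ)M_{ij} and P(A_{ij}=0) = 1-(1-ρ)M_{ij}, and let Y have independent entries with P(Y_{ij}=1)=M_{ij} coupled so that A_{ij}=1 implies Y_{ij}=1. Define the shifted loss ℓ̃(x,1) = ((x-1)^2 - ρx^2)/(1-ρ) and ℓ̃(x,0) = x^2. Then for any fixed matrix X ∈ ℝ^{m×n}, E[Σ_{i,j} (X_{ij} - Y_{ij})^2] = E[Σ_{i,j} ℓ̃(X_{ij}, A_{ij})]. -/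

import Mathlib

open MeasureTheory

/-- The shifted loss ℓ̃: ℓ̃(x,1) = ((x-1)² - ρx²)/(1-ρ) and ℓ̃(x,0) = x². -/
noncomputable def shiftedLoss (ρ x a : ℝ) : ℝ :=
  if a = 1 then ((x - 1) ^ 2 - ρ * x ^ 2) / (1 - ρ) else x ^ 2

lemma bool_eq_indicator {Ω : Type*} (f : Ω → ℝ) (h01 : ∀ ω, f ω = 0 ∨ f ω = 1) :
    f = Set.indicator {ω | f ω = 1} (fun _ => (1 : ℝ)) := by
  funext ω
  rcases h01 ω with h | h
  · have : ω ∉ {ω | f ω = 1} := by simp [h]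
    simp [Set.indicator, this, h]
  · have : ω ∈ {ω | f ω = 1} := h
    simp [Set.indicator, this, h]

lemma bool_integrable {Ω : Type*} [MeasurableSpace Ω] (μ : Measure Ω)
    [IsProbabilityMeasure μ] (f : Ω → ℝ) (hf : Measurable f)
    (h01 : ∀ ω, f ω = 0 ∨ f ω = 1) : Integrable f μ := by
  have hs : MeasurableSet {ω | f ω = 1} := hf (measurableSet_singleton 1)
  rw [bool_eq_indicator f h01]
  exact (integrable_const (1 : ℝ)).indicator hs

lemma bool_integral {Ω : Type*} [MeasurableSpace Ω] (μ : Measure Ω)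
    [IsProbabilityMeasure μ] (f : Ω → ℝ) (hf : Measurable f)
    (h01 : ∀ ω, f ω = 0 ∨ f ω = 1) (p : ℝ) (hp : 0 ≤ p)
    (hμ : μ {ω | f ω = 1} = ENNReal.ofReal p) : ∫ ω, f ω ∂μ = p := by
  have hs : MeasurableSet {ω | f ω = 1} := hf (measurableSet_singleton 1)
  conv_lhs => rw [bool_eq_indicator f h01]
  rw [integral_indicator_const (1 : ℝ) hs, measureReal_def, hμ, ENNReal.toReal_ofReal hp]
  simp

lemma aff_integrable {Ω : Type*} [MeasurableSpace Ω] (μ : Measure Ω)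
    [IsProbabilityMeasure μ] (f : Ω → ℝ) (hf : Measurable f)
    (h01 : ∀ ω, f ω = 0 ∨ f ω = 1) (c d : ℝ) :
    Integrable (fun ω => c + d * f ω) μ :=
  (integrable_const c).add ((bool_integrable μ f hf h01).const_mul d)

lemma aff_integral {Ω : Type*} [MeasurableSpace Ω] (μ : Measure Ω)
    [IsProbabilityMeasure μ] (f : Ω → ℝ) (hf : Measurable f)
    (h01 : ∀ ω, f ω = 0 ∨ f ω = 1) (p : ℝ) (hp : 0 ≤ p)
    (hμ : μ {ω | f ω = 1} = ENNReal.ofReal p) (c d : ℝ) :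
    ∫ ω, (c + d * f ω) ∂μ = c + d * p := by
  rw [integral_add (integrable_const c) ((bool_integrable μ f hf h01).const_mul d),
    integral_const, integral_const_mul, bool_integral μ f hf h01 p hp hμ]
  simp

/-- Unbiasedness of the shifted loss: if Y has Bernoulli(M_{ij}) entries and A has
    Bernoulli((1-ρ)M_{ij}) entries with A_{ij}=1 → Y_{ij}=1, then for any fixed X,
    E[Σ_{ij}(X_{ij}-Y_{ij})²] = E[Σ_{ij} ℓ̃(X_{ij},A_{ij})]. -/
theorem shifted_loss_unbiased {m n : ℕ} {Ω : Type*} [MeasurableSpace Ω]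
    (μ : Measure Ω) [IsProbabilityMeasure μ]
    (M : Fin m → Fin n → ℝ) (ρ : ℝ) (hρ0 : 0 ≤ ρ) (hρ1 : ρ < 1)
    (hM : ∀ i j, M i j ∈ Set.Icc (0 : ℝ) 1)
    (A Y : Ω → Fin m → Fin n → ℝ)
    (hAmeas : ∀ i j, Measurable fun ω => A ω i j)
    (hYmeas : ∀ i j, Measurable fun ω => Y ω i j)
    (hA01 : ∀ ω i j, A ω i j = 0 ∨ A ω i j = 1)
    (hY01 : ∀ ω i j, Y ω i j = 0 ∨ Y ω i j = 1)
    (hAprob : ∀ i j, μ {ω | A ω i j = 1} = ENNReal.ofReal ((1 - ρ) * M i j))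
    (hYprob : ∀ i j, μ {ω | Y ω i j = 1} = ENNReal.ofReal (M i j))
    (hcouple : ∀ ω i j, A ω i j = 1 → Y ω i j = 1)
    (X : Fin m → Fin n → ℝ) :
    ∫ ω, ∑ i, ∑ j, (X i j - Y ω i j) ^ 2 ∂μ =
      ∫ ω, ∑ i, ∑ j, shiftedLoss ρ (X i j) (A ω i j) ∂μ := by
  have hρ : (1 : ℝ) - ρ ≠ 0 := by linarith
  have hL : ∀ ω, ∑ i, ∑ j, (X i j - Y ω i j) ^ 2 =
      ∑ i, ∑ j, (X i j ^ 2 + (1 - 2 * X i j) * Y ω i j) := by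
    intro ω
    refine Finset.sum_congr rfl fun i _ => Finset.sum_congr rfl fun j _ => ?_
    rcases hY01 ω i j with h | h <;> rw [h] <;> ring
  have hR : ∀ ω, ∑ i, ∑ j, shiftedLoss ρ (X i j) (A ω i j) =
      ∑ i, ∑ j, (X i j ^ 2 +
        (((X i j - 1) ^ 2 - ρ * X i j ^ 2) / (1 - ρ) - X i j ^ 2) * A ω i j) := by
    intro ω
    refine Finset.sum_congr rfl fun i _ => Finset.sum_congr rfl fun j _ => ?_
    rcases hA01 ω i j with h | h <;> simp [shiftedLoss, h]
  simp only [hL, hR]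
  rw [integral_finset_sum _ (fun i _ => integrable_finset_sum _ (fun j _ =>
      aff_integrable μ _ (hYmeas i j) (fun ω => hY01 ω i j) _ _)),
    integral_finset_sum _ (fun i _ => integrable_finset_sum _ (fun j _ =>
      aff_integrable μ _ (hAmeas i j) (fun ω => hA01 ω i j) _ _))]
  refine Finset.sum_congr rfl fun i _ => ?_
  rw [integral_finset_sum _ (fun j _ =>
      aff_integrable μ _ (hYmeas i j) (fun ω => hY01 ω i j) _ _),
    integral_finset_sum _ (fun j _ =>
      aff_integrable μ _ (hAmeas i j) (fun ω => hA01 ω i j) _ _)]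
  refine Finset.sum_congr rfl fun j _ => ?_
  have hM0 : 0 ≤ M i j := (hM i j).1
  have hA0 : 0 ≤ (1 - ρ) * M i j := mul_nonneg (by linarith) hM0
  rw [aff_integral μ _ (hYmeas i j) (fun ω => hY01 ω i j) _ hM0 (hYprob i j),
    aff_integral μ _ (hAmeas i j) (fun ω => hA01 ω i j) _ hA0 (hAprob i j)]
  field_simp
  ring
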